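/- Let B₁ and B₂ be two bases of a matroid M, and let M' be obtained from M by contracting a subset of B₁ and deleting a subset of E(M) \ B₁, such that B₁' = B₁ ∩ E(M') and B₂' = B₂ ∩ E(M') partition E(M') into two disjoint bases of M'. Suppose there exist pairwise disjoint nonempty subsets X₁, …, X_k ⊆ B₁' and Y₁, …, Y_k ⊆ B₂' such that (B₁' \ ⋃_{i∈Z} X_i) ∪ ⋃_{i∈Z} Y_i is a basis of M' for every Z ⊆ [k]. Then there exist pairwise disjoint nonempty subsets X₁, …, X_k ⊆ B₁ \ B₂ and Y₁, …, Y_k ⊆ B₂ \ B₁ such that (B₁ \ ⋃_{i∈Z} X_i) ∪ ⋃_{i∈Z} Y_i is a basis of M for every Z ⊆ [k]. -/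

import Mathlib

open scoped Matroid

/-- The contraction `M / C` of a matroid, obtained by duality from restriction. -/
noncomputable def Matroid.contract' {α : Type*} (M : Matroid α) (C : Set α) : Matroid α :=
  (M✶ ↾ (M.E \ C))✶

/-- The deletion `M \ D` of a matroid, i.e. the restriction to `M.E \ D`. -/
noncomputable def Matroid.delete' {α : Type*} (M : Matroid α) (D : Set α) : Matroid α :=
  M ↾ (M.E \ D)

open Set

/-- If `R` contains a base, then bases of `R` are exactly bases contained in `R`. -/
lemma basis_iff_base_of_base_subset {α : Type*} {N : Matroid α} {B₀ S R : Set α}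
    (hB₀ : N.IsBase B₀) (hB₀R : B₀ ⊆ R) (hR : R ⊆ N.E) :
    N.IsBasis S R ↔ N.IsBase S ∧ S ⊆ R := by
  constructor
  · intro h
    obtain ⟨B', hB', hSB', hsub⟩ := h.indep.exists_isBase_subset_union_isBase hB₀
    have hB'R : B' ⊆ R := hsub.trans (union_subset h.subset hB₀R)
    have hBS : S = B' := h.eq_of_subset_indep hB'.indep hSB' hB'R
    exact ⟨hBS ▸ hB', h.subset⟩
  · rintro ⟨hS, hSR⟩
    exact hS.isBasis_of_subset hR hSR

lemma contract'_base_iff {α : Type*} {M : Matroid α} {B₁ C T : Set α}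
    (hB₁ : M.IsBase B₁) (hC : C ⊆ B₁) (hT : T ⊆ M.E \ C) :
    (M.contract' C).IsBase T ↔ M.IsBase (T ∪ C) := by
  have hCE : C ⊆ M.E := hC.trans hB₁.subset_ground
  have hdsub : M.E \ C ⊆ M✶.E := by rw [Matroid.dual_ground]; exact diff_subset
  have hB₀ : M✶.IsBase (M.E \ B₁) := by
    rw [Matroid.dual_isBase_iff diff_subset, diff_diff_cancel_left hB₁.subset_ground]
    exact hB₁
  have hB₀R : M.E \ B₁ ⊆ M.E \ C := diff_subset_diff_right hC
  rw [Matroid.contract', Matroid.dual_isBase_iff (by simpa using hT),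
    Matroid.restrict_ground_eq, Matroid.isBase_restrict_iff hdsub,
    basis_iff_base_of_base_subset hB₀ hB₀R hdsub,
    and_iff_left diff_subset,
    Matroid.dual_isBase_iff (show (M.E \ C) \ T ⊆ M.E from diff_subset.trans diff_subset)]
  have hset : M.E \ ((M.E \ C) \ T) = T ∪ C := by
    ext x
    simp only [mem_diff, mem_union, not_and, not_not]
    constructor
    · rintro ⟨hxE, hx⟩
      by_cases hxC : x ∈ C
      · exact Or.inr hxC
      · exact Or.inl (hx ⟨hxE, hxC⟩)
    · rintro (hxT | hxC)
      · exact ⟨(hT hxT).1, fun _ => hxT⟩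
      · exact ⟨hCE hxC, fun h => absurd hxC h.2⟩
  rw [hset]

lemma contract'_ground {α : Type*} (M : Matroid α) (C : Set α) :
    (M.contract' C).E = M.E \ C := rfl

/-- If `M'` is a `B₁`-minor of `M` such that `(B₁ ∩ E(M'), B₂ ∩ E(M'))` is
a basis partition of `M'` having the `k`-exchange property, then `(B₁, B₂)` has the
`k`-exchange property in `M`. -/
theorem stmt_10 {α : Type*} (M : Matroid α) [M.Finite] (B₁ B₂ : Set α)
    (hB₁ : M.IsBase B₁) (hB₂ : M.IsBase B₂)
    (C D : Set α) (hC : C ⊆ B₁) (hD : D ⊆ M.E \ B₁)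
    (M' : Matroid α) (hM' : M' = (M.contract' C).delete' D)
    (hpart1 : M'.IsBase (B₁ ∩ M'.E)) (hpart2 : M'.IsBase (B₂ ∩ M'.E))
    (hpartdisj : Disjoint (B₁ ∩ M'.E) (B₂ ∩ M'.E))
    (hpartun : (B₁ ∩ M'.E) ∪ (B₂ ∩ M'.E) = M'.E)
    (k : ℕ) (X Y : Fin k → Set α)
    (hXsub : ∀ i, X i ⊆ B₁ ∩ M'.E) (hYsub : ∀ i, Y i ⊆ B₂ ∩ M'.E)
    (hXne : ∀ i, (X i).Nonempty) (hYne : ∀ i, (Y i).Nonempty)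
    (hXdisj : Pairwise (Function.onFun Disjoint X))
    (hYdisj : Pairwise (Function.onFun Disjoint Y))
    (hexch : ∀ Z : Set (Fin k),
      M'.IsBase (((B₁ ∩ M'.E) \ ⋃ i ∈ Z, X i) ∪ ⋃ i ∈ Z, Y i)) :
    ∃ X' Y' : Fin k → Set α,
      (∀ i, X' i ⊆ B₁ \ B₂) ∧ (∀ i, Y' i ⊆ B₂ \ B₁) ∧
      (∀ i, (X' i).Nonempty) ∧ (∀ i, (Y' i).Nonempty) ∧
      Pairwise (Function.onFun Disjoint X') ∧
      Pairwise (Function.onFun Disjoint Y') ∧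
      ∀ Z : Set (Fin k), M.IsBase ((B₁ \ ⋃ i ∈ Z, X' i) ∪ ⋃ i ∈ Z, Y' i) := by
  have hB₁E : B₁ ⊆ M.E := hB₁.subset_ground
  have hCE : C ⊆ M.E := hC.trans hB₁E
  have hME' : M'.E = (M.E \ C) \ D := by
    rw [hM', Matroid.delete', Matroid.restrict_ground_eq, contract'_ground]
  have hB₁D : Disjoint B₁ D := by
    rw [disjoint_comm]
    exact (subset_diff.mp hD).2
  -- B₁ ∩ M'.E = B₁ \ C
  have hB₁cap : B₁ ∩ M'.E = B₁ \ C := by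
    rw [hME']
    ext x
    simp only [mem_inter_iff, mem_diff]
    constructor
    · rintro ⟨h1, ⟨_, h3⟩, _⟩; exact ⟨h1, h3⟩
    · rintro ⟨h1, h2⟩
      exact ⟨h1, ⟨hB₁E h1, h2⟩, fun hx => hB₁D.ne_of_mem h1 hx rfl⟩
  have hB₁C : B₁ \ C ∪ C = B₁ := diff_union_of_subset hC
  -- base of M' iff base of M after adding C
  have key : ∀ S : Set α, M'.IsBase S → M.IsBase (S ∪ C) := by
    intro S hS
    have hB₀ : (M.contract' C).IsBase (B₁ \ C) := by
      rw [contract'_base_iff hB₁ hC (diff_subset_diff_left hB₁E), hB₁C]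
      exact hB₁
    have hB₀R : B₁ \ C ⊆ (M.E \ C) \ D := by
      rw [← hME', ← hB₁cap]
      exact inter_subset_right
    have hRE : (M.E \ C) \ D ⊆ (M.contract' C).E := by
      rw [contract'_ground]; exact diff_subset
    rw [hM', Matroid.delete', contract'_ground,
      Matroid.isBase_restrict_iff hRE,
      basis_iff_base_of_base_subset hB₀ hB₀R hRE] at hS
    have := hS.1
    rw [contract'_base_iff hB₁ hC (hS.2.trans diff_subset)] at this
    exact this
  refine ⟨X, Y, ?_, ?_, hXne, hYne, hXdisj, hYdisj, ?_⟩
  · intro i x hx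
    have h1 := hXsub i hx
    refine ⟨h1.1, fun hx2 => ?_⟩
    exact hpartdisj.ne_of_mem h1 ⟨hx2, h1.2⟩ rfl
  · intro i x hx
    have h1 := hYsub i hx
    refine ⟨h1.1, fun hx2 => ?_⟩
    exact hpartdisj.ne_of_mem ⟨hx2, h1.2⟩ h1 rfl
  · intro Z
    have hbase := key _ (hexch Z)
    have hXC : Disjoint (⋃ i ∈ Z, X i) C := by
      refine disjoint_left.mpr fun x hx hxC => ?_
      simp only [mem_iUnion] at hx
      obtain ⟨i, _, hxi⟩ := hx
      have := (hXsub i hxi)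
      rw [hB₁cap] at this
      exact this.2 hxC
    have hset : (((B₁ ∩ M'.E) \ ⋃ i ∈ Z, X i) ∪ ⋃ i ∈ Z, Y i) ∪ C
        = (B₁ \ ⋃ i ∈ Z, X i) ∪ ⋃ i ∈ Z, Y i := by
      rw [hB₁cap]
      ext x
      simp only [mem_union, mem_diff]
      constructor
      · rintro ((⟨⟨h1, _⟩, h2⟩ | h) | hxC)
        · exact Or.inl ⟨h1, h2⟩
        · exact Or.inr h
        · exact Or.inl ⟨hC hxC, fun hx => hXC.ne_of_mem hx hxC rfl⟩
      · rintro (⟨h1, h2⟩ | h)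
        · by_cases hxC : x ∈ C
          · exact Or.inr hxC
          · exact Or.inl (Or.inl ⟨⟨h1, hxC⟩, h2⟩)
        · exact Or.inl (Or.inr h)
    rwa [hset] at hbase
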